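/- Let k ≥ 2 and d ≥ 1 be integers with (k−1) | d, and let l = d/(k−1). The graph G_{k,d}, consisting of a complete bipartite graph K_{d,d} with parts U₁, U₂ together with l disjoint cliques K_{d+1}, where for each i the i-th clique is joined by a single edge from a vertex v_i of the clique to a distinct vertex u_i ∈ U₁, has no spanning tree T such that every vertex of T has degree 1 or degree greater than k. -/

import Mathlib

/-- Vertices of `Gkd`: `Sum.inl (Sum.inl a)` is the vertex `a` of `U₁`,
`Sum.inl (Sum.inr b)` is the vertex `b` of `U₂`, and `Sum.inr (i, j)` is the `j`-th vertex of
the `i`-th clique `H_i ≅ K_{d+1}`; `v_i` is the vertex `(i, 0)` and `u_i` is the vertex of `U₁`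
with index `i`. -/
def Gkd (d l : ℕ) : SimpleGraph ((Fin d ⊕ Fin d) ⊕ (Fin l × Fin (d + 1))) :=
  SimpleGraph.fromRel (fun x y =>
    match x, y with
    | Sum.inl (Sum.inl _), Sum.inl (Sum.inr _) => True           -- complete bipartite U₁–U₂
    | Sum.inr (i, _), Sum.inr (i', _) => i = i'                  -- cliques K_{d+1}
    | Sum.inl (Sum.inl a), Sum.inr (i, j) => (a : ℕ) = (i : ℕ) ∧ j = 0  -- edges u_i v_i
    | _, _ => False)

open SimpleGraph Sum Walk

lemma adj_u {d l : ℕ} {a : Fin d} {y} (h : (Gkd d l).Adj (inl (inl a)) y) :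
    (∃ b, y = inl (inr b)) ∨ (∃ i : Fin l, (a : ℕ) = (i : ℕ) ∧ y = inr (i, 0)) := by
  rw [Gkd, SimpleGraph.fromRel_adj] at h
  obtain ⟨hne, h | h⟩ := h
  · rcases y with (a' | b) | ⟨i, j⟩
    · simp at h
    · exact Or.inl ⟨b, rfl⟩
    · obtain ⟨h1, h2⟩ := h
      exact Or.inr ⟨i, h1, by rw [h2]⟩
  · rcases y with (a' | b) | ⟨i, j⟩ <;> simp at h

lemma adj_c {d l : ℕ} {i : Fin l} {j : Fin (d+1)} {y} (h : (Gkd d l).Adj (inr (i, j)) y) :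
    (∃ j', y = inr (i, j')) ∨ (∃ a : Fin d, (a : ℕ) = (i : ℕ) ∧ j = 0 ∧ y = inl (inl a)) := by
  rw [Gkd, SimpleGraph.fromRel_adj] at h
  obtain ⟨hne, h | h⟩ := h
  · rcases y with (a' | b) | ⟨i', j'⟩
    · simp at h
    · simp at h
    · exact Or.inl ⟨j', by rw [h]⟩
  · rcases y with (a' | b) | ⟨i', j'⟩
    · obtain ⟨h1, h2⟩ := h
      exact Or.inr ⟨a', h1, h2, rfl⟩
    · simp at h
    · obtain rfl := h
      exact Or.inl ⟨j', rfl⟩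

lemma firstDart_edge_inj {V : Type*} {T : SimpleGraph V} {r : V}
    (f : ∀ v, T.Walk v r) (hf : ∀ v, (f v).IsPath)
    (hf' : ∀ v (q : T.Walk v r), q.IsPath → q = f v)
    {a b : V} (ha : a ≠ r) (hb : b ≠ r)
    (h : ((f a).firstDart (not_nil_of_ne ha)).edge = ((f b).firstDart (not_nil_of_ne hb)).edge) :
    a = b := by
  wlog h' : (f a).length ≤ (f b).length generalizing a b
  · exact Eq.symm (this hb ha h.symm (le_of_not_ge h'))
  rw [dart_edge_eq_iff] at h
  obtain (h | h) := h
  · exact (congrArg (·.fst) h)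
  · have h1 : (f a).snd = b := congrArg (·.snd) h
    have h3 := congrArg Walk.length (hf' _ ((f _).tail.copy h1 rfl) ?_)
    · rw [length_copy, ← add_left_inj 1, length_tail_add_one (not_nil_of_ne ha)] at h3
      omega
    · simp only [ne_eq, eq_mp_eq_cast, id_eq, isPath_copy]
      exact (hf _).tail

lemma gkd_aux (k d l : ℕ) (hk : 2 ≤ k) (hd : 1 ≤ d) (hld : l * (k - 1) = d)
    (T : SimpleGraph ((Fin d ⊕ Fin d) ⊕ (Fin l × Fin (d + 1))))
    (hle : T ≤ Gkd d l) (htree : T.IsTree)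
    (hdeg : ∀ v, (T.neighborSet v).ncard = 1 ∨ k < (T.neighborSet v).ncard) : False := by
  classical
  have hlle : l ≤ d := by
    calc l = l * 1 := (mul_one l).symm
    _ ≤ l * (k - 1) := Nat.mul_le_mul_left l (by omega)
    _ = d := hld
  have hil : ∀ i : Fin l, (i : ℕ) < d := fun i => lt_of_lt_of_le i.2 hlle
  set r : (Fin d ⊕ Fin d) ⊕ (Fin l × Fin (d + 1)) := inl (inr ⟨0, hd⟩) with hrdef
  -- every u_i is adjacent in T to v_i
  have bridge : ∀ i : Fin l, T.Adj (inl (inl ⟨(i : ℕ), hil i⟩)) (inr (i, 0)) := by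
    intro i
    obtain ⟨w⟩ := htree.isConnected.preconnected (inr (i, (0 : Fin (d+1)))) r
    obtain ⟨dt, _, h1, h2⟩ := w.exists_boundary_dart {x | ∃ j, x = inr (i, j)}
      ⟨0, rfl⟩ (by simp [hrdef])
    obtain ⟨j, hj⟩ := h1
    have hadj := hle dt.adj
    rw [hj] at hadj
    rcases adj_c hadj with ⟨j', hj'⟩ | ⟨a, ha1, ha2, ha3⟩
    · exact absurd ⟨j', hj'⟩ h2
    · have ha : a = ⟨(i : ℕ), hil i⟩ := Fin.ext ha1
      have := dt.adj
      rw [hj, ha3, ha, ha2] at this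
      exact this.symm
  -- every u_i has a neighbor in U₂
  have unbr : ∀ i : Fin l, ∃ b : Fin d, T.Adj (inl (inl ⟨(i : ℕ), hil i⟩)) (inl (inr b)) := by
    intro i
    obtain ⟨w⟩ := htree.isConnected.preconnected (inl (inl ⟨(i : ℕ), hil i⟩)) r
    obtain ⟨dt, _, h1, h2⟩ := w.exists_boundary_dart
      {x | (∃ j, x = inr (i, j)) ∨ x = inl (inl ⟨(i : ℕ), hil i⟩)}
      (Or.inr rfl) (by simp [hrdef])
    have hadj := hle dt.adj
    rcases h1 with ⟨j, hj⟩ | hj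
    · rw [hj] at hadj
      rcases adj_c hadj with ⟨j', hj'⟩ | ⟨a, ha1, _, ha3⟩
      · exact absurd (Or.inl ⟨j', hj'⟩) h2
      · refine absurd (Or.inr ?_) h2
        rw [ha3, show a = ⟨(i : ℕ), hil i⟩ from Fin.ext ha1]
    · rw [hj] at hadj
      rcases adj_u hadj with ⟨b, hb⟩ | ⟨i', hi1, hi2⟩
      · refine ⟨b, ?_⟩
        have := dt.adj; rw [hj, hb] at this; exact this
      · have hii : i' = i := Fin.ext (by simpa using hi1.symm)
        exact absurd (Or.inl ⟨0, by rw [hi2, hii]⟩) h2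
  -- every other vertex of U₁ has a neighbor in U₂
  have uoth : ∀ a : Fin d, l ≤ (a : ℕ) → ∃ b : Fin d, T.Adj (inl (inl a)) (inl (inr b)) := by
    intro a hla
    obtain ⟨w⟩ := htree.isConnected.preconnected (inl (inl a)) r
    obtain ⟨dt, _, h1, h2⟩ := w.exists_boundary_dart {x | x = inl (inl a)}
      rfl (by simp only [Set.mem_setOf_eq, hrdef]; simp)
    have hadj := hle dt.adj
    rw [h1] at hadj
    rcases adj_u hadj with ⟨b, hb⟩ | ⟨i', hi1, _⟩
    · refine ⟨b, ?_⟩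
      have := dt.adj; rw [h1, hb] at this; exact this
    · have := hil i'; omega
  set N : Fin d → Finset (Fin d) := fun a =>
    Finset.univ.filter (fun b => T.Adj (inl (inl a)) (inl (inr b))) with hNdef
  have hNk : ∀ i : Fin l, k ≤ (N ⟨(i : ℕ), hil i⟩).card := by
    intro i
    obtain ⟨b, hb⟩ := unbr i
    have h2 : 2 ≤ (T.neighborSet (inl (inl ⟨(i : ℕ), hil i⟩))).ncard := by
      have hsub : ({inr (i, 0), inl (inr b)} :
          Set ((Fin d ⊕ Fin d) ⊕ (Fin l × Fin (d + 1)))) ⊆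
          T.neighborSet (inl (inl ⟨(i : ℕ), hil i⟩)) := by
        rintro x (rfl | rfl)
        · exact bridge i
        · exact hb
      calc 2 = ({inr (i, 0), inl (inr b)} :
          Set ((Fin d ⊕ Fin d) ⊕ (Fin l × Fin (d + 1)))).ncard := by
            rw [Set.ncard_pair (by simp)]
      _ ≤ _ := Set.ncard_le_ncard hsub (Set.toFinite _)
    have hk' : k < (T.neighborSet (inl (inl ⟨(i : ℕ), hil i⟩))).ncard := by
      rcases hdeg (inl (inl ⟨(i : ℕ), hil i⟩)) with h | h
      · omega
      · exact h
    have hsub2 : T.neighborSet (inl (inl ⟨(i : ℕ), hil i⟩)) ⊆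
        (fun b => (inl (inr b) : (Fin d ⊕ Fin d) ⊕ (Fin l × Fin (d + 1)))) ''
          ↑(N ⟨(i : ℕ), hil i⟩) ∪ {inr (i, 0)} := by
      intro y hy
      have hadj : T.Adj (inl (inl ⟨(i : ℕ), hil i⟩)) y := hy
      rcases adj_u (hle hadj) with ⟨b', rfl⟩ | ⟨i', hi1, rfl⟩
      · left
        exact ⟨b', by simp [hNdef, hadj], rfl⟩
      · right
        have hii : i' = i := Fin.ext (by simpa using hi1.symm)
        simp [hii]
    have hle1 := Set.ncard_le_ncard hsub2 (Set.toFinite _)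
    have hle2 := Set.ncard_union_le
      ((fun b => (inl (inr b) : (Fin d ⊕ Fin d) ⊕ (Fin l × Fin (d + 1)))) ''
        ↑(N ⟨(i : ℕ), hil i⟩)) {inr (i, 0)}
    have hle3 := Set.ncard_image_le (s := (↑(N ⟨(i : ℕ), hil i⟩) :
      Set (Fin d))) (f := fun b => (inl (inr b) : (Fin d ⊕ Fin d) ⊕ (Fin l × Fin (d + 1))))
      (Set.toFinite _)
    rw [Set.ncard_coe_finset] at hle3
    have hsing : ({inr (i, 0)} :
        Set ((Fin d ⊕ Fin d) ⊕ (Fin l × Fin (d + 1)))).ncard = 1 := Set.ncard_singleton _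
    omega
  have hN1 : ∀ a : Fin d, 1 ≤ (N a).card := by
    intro a
    by_cases h : (a : ℕ) < l
    · have := hNk ⟨(a : ℕ), h⟩
      have ha : (⟨(a : ℕ), hil ⟨(a : ℕ), h⟩⟩ : Fin d) = a := Fin.ext rfl
      rw [ha] at this
      omega
    · obtain ⟨b, hb⟩ := uoth a (le_of_not_gt h)
      exact Finset.card_pos.mpr ⟨b, by simp [hNdef, hb]⟩
  -- edge counting
  have hcardV : Fintype.card ((Fin d ⊕ Fin d) ⊕ (Fin l × Fin (d + 1)))
      = d + d + l * (d + 1) := by simp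
  have hT : T.edgeFinset.card + 1 = d + d + l * (d + 1) := by
    rw [htree.card_edgeFinset, hcardV]
  set P : Sym2 ((Fin d ⊕ Fin d) ⊕ (Fin l × Fin (d + 1))) → Prop :=
    fun e => ∀ x ∈ e, x.isLeft = true with hPdef
  -- lower bound on bipartite edges
  have hEB : l * k + (d - l) ≤ (T.edgeFinset.filter P).card := by
    have hsub : (Finset.univ.biUnion fun a : Fin d => (N a).image fun b =>
        s((inl (inl a) : (Fin d ⊕ Fin d) ⊕ (Fin l × Fin (d + 1))), inl (inr b))) ⊆
        T.edgeFinset.filter P := by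
      intro e he
      simp only [Finset.mem_biUnion, Finset.mem_image] at he
      obtain ⟨a, -, b, hb, rfl⟩ := he
      have hadj : T.Adj (inl (inl a)) (inl (inr b)) := by
        simpa [hNdef] using hb
      rw [Finset.mem_filter]
      refine ⟨SimpleGraph.mem_edgeFinset.mpr hadj, ?_⟩
      intro x hx
      rcases Sym2.mem_iff.mp hx with rfl | rfl <;> rfl
    have hdisj : ∀ a ∈ (Finset.univ : Finset (Fin d)), ∀ a' ∈ Finset.univ, a ≠ a' →
        Disjoint ((N a).image fun b =>
            s((inl (inl a) : (Fin d ⊕ Fin d) ⊕ (Fin l × Fin (d + 1))), inl (inr b)))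
          ((N a').image fun b =>
            s((inl (inl a') : (Fin d ⊕ Fin d) ⊕ (Fin l × Fin (d + 1))), inl (inr b))) := by
      intro a _ a' _ hne
      rw [Finset.disjoint_left]
      intro e he he'
      simp only [Finset.mem_image] at he he'
      obtain ⟨b, -, hb⟩ := he
      obtain ⟨b', -, hb'⟩ := he'
      rw [← hb'] at hb
      rw [Sym2.eq_iff] at hb
      rcases hb with ⟨h1, -⟩ | ⟨h1, -⟩
      · exact hne (by injection (inl_injective h1))
      · simp at h1
    have hcardb := Finset.card_biUnion hdisj
    have himg : ∀ a : Fin d, ((N a).image fun b =>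
        s((inl (inl a) : (Fin d ⊕ Fin d) ⊕ (Fin l × Fin (d + 1))), inl (inr b))).card
        = (N a).card := by
      intro a
      apply Finset.card_image_of_injective
      intro b b' hbb
      rw [Sym2.eq_iff] at hbb
      rcases hbb with ⟨-, h2⟩ | ⟨h1, -⟩
      · exact inr_injective (inl_injective h2)
      · simp at h1
    have hsum : l * k + (d - l) ≤ ∑ a : Fin d, (N a).card := by
      have hfil : (Finset.univ.filter fun a : Fin d => (a : ℕ) < l).card = l := by
        have : (Finset.univ.filter fun a : Fin d => (a : ℕ) < l) =
            Finset.univ.map ⟨Fin.castLE hlle, Fin.castLE_injective hlle⟩ := by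
          ext a
          simp only [Finset.mem_filter, Finset.mem_univ, true_and, Finset.mem_map,
            Function.Embedding.coeFn_mk]
          constructor
          · intro h
            exact ⟨⟨(a : ℕ), h⟩, Fin.ext rfl⟩
          · rintro ⟨i, rfl⟩
            simp
        rw [this, Finset.card_map]
        simp
      have hstep : ∑ a : Fin d, (if (a : ℕ) < l then k else 1) ≤ ∑ a : Fin d, (N a).card := by
        apply Finset.sum_le_sum
        intro a _
        by_cases h : (a : ℕ) < l
        · rw [if_pos h]
          have := hNk ⟨(a : ℕ), h⟩
          rwa [show (⟨(a : ℕ), hil ⟨(a : ℕ), h⟩⟩ : Fin d) = a from Fin.ext rfl] at this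
        · rw [if_neg h]
          exact hN1 a
      have hval : ∑ a : Fin d, (if (a : ℕ) < l then k else 1) = l * k + (d - l) := by
        rw [Finset.sum_ite, Finset.sum_const, Finset.sum_const, hfil]
        have hfil2 : (Finset.univ.filter fun a : Fin d => ¬ (a : ℕ) < l).card = d - l := by
          have := Finset.card_filter_add_card_filter_not
            (s := (Finset.univ : Finset (Fin d))) (p := fun a : Fin d => (a : ℕ) < l)
          simp only [Finset.card_univ, Fintype.card_fin] at this
          omega
        rw [hfil2]
        simp [mul_comm]
      omega
    calc l * k + (d - l) ≤ ∑ a : Fin d, (N a).card := hsum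
    _ = (Finset.univ.biUnion fun a : Fin d => (N a).image fun b =>
        s((inl (inl a) : (Fin d ⊕ Fin d) ⊕ (Fin l × Fin (d + 1))), inl (inr b))).card := by
        rw [hcardb]
        exact (Finset.sum_congr rfl fun a _ => (himg a).symm)
    _ ≤ _ := Finset.card_le_card hsub
  -- lower bound on non-bipartite edges
  have hEC : l * (d + 1) ≤ (T.edgeFinset.filter fun e => ¬ P e).card := by
    choose f hf hf' using (htree.existsUnique_path · r)
    have hner : ∀ x : Fin l × Fin (d + 1),
        (inr x : (Fin d ⊕ Fin d) ⊕ (Fin l × Fin (d + 1))) ≠ r := by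
      intro x
      simp [hrdef]
    have hmaps : ∀ x : Fin l × Fin (d + 1),
        ((f (inr x)).firstDart (not_nil_of_ne (hner x))).edge ∈
          T.edgeFinset.filter fun e => ¬ P e := by
      intro x
      rw [Finset.mem_filter]
      refine ⟨SimpleGraph.mem_edgeFinset.mpr (Dart.edge_mem _), ?_⟩
      intro hP
      have hmem : (inr x : (Fin d ⊕ Fin d) ⊕ (Fin l × Fin (d + 1))) ∈
          ((f (inr x)).firstDart (not_nil_of_ne (hner x))).edge := by
        rw [Walk.edge_firstDart]
        exact Sym2.mem_mk_left _ _
      have := hP _ hmem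
      simp at this
    have hinj : ∀ x ∈ (Finset.univ : Finset (Fin l × Fin (d + 1))),
        ∀ y ∈ Finset.univ,
        ((f (inr x)).firstDart (not_nil_of_ne (hner x))).edge =
          ((f (inr y)).firstDart (not_nil_of_ne (hner y))).edge → x = y := by
      intro x _ y _ h
      exact inr_injective (firstDart_edge_inj f hf hf' (hner x) (hner y) h)
    have := Finset.card_le_card_of_injOn
      (f := fun x : Fin l × Fin (d + 1) =>
        ((f (inr x)).firstDart (not_nil_of_ne (hner x))).edge)
      (fun x _ => hmaps x) hinj
    simpa using this
  -- conclusion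
  have hsplit := Finset.card_filter_add_card_filter_not
    (s := T.edgeFinset) (p := P)
  have hlk : l * k = d + l := by
    calc l * k = l * ((k - 1) + 1) := by rw [Nat.sub_add_cancel (by omega)]
    _ = l * (k - 1) + l := by ring
    _ = d + l := by rw [hld]
  omega

theorem stmt_12 (k d : ℕ) (hk : 2 ≤ k) (hd : 1 ≤ d) (hdvd : (k - 1) ∣ d) :
    ¬ ∃ T : SimpleGraph ((Fin d ⊕ Fin d) ⊕ (Fin (d / (k - 1)) × Fin (d + 1))),
        T ≤ Gkd d (d / (k - 1)) ∧ T.IsTree ∧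
        ∀ v, (T.neighborSet v).ncard = 1 ∨ k < (T.neighborSet v).ncard := by
  rintro ⟨T, hle, htree, hdeg⟩
  exact gkd_aux k d (d / (k - 1)) hk hd (Nat.div_mul_cancel hdvd) T hle htree hdeg
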